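/- arXiv:2205.09996 — 2 statements merged into one kernel-verified Lean document; each statement's English description precedes it below -/
import Mathlib

section
/- Fix δ > 0 and m₂ ∈ (0, 1), and set m* = 1 - m₂. There exists a unique pair (σ², m₁) with σ² > 0, m₁ > 0 such that m₁(1 - erf(δ/√(2σ²))) = 1 - m₂ and (2m₁/√π)·(δ/√(2σ²))·exp(-δ²/(2σ²)) = m₂; explicitly σ² = δ²/(2x̄²) and m₁ = m*/(1 - erf(x̄)), where x̄ is the unique positive solution of (2/√π)·x·exp(-x²)/(1 - erf(x)) = (1 - m*)/m*. -/
open Real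

/-- Error function. -/
noncomputable def erf (x : ℝ) : ℝ := (2 / Real.sqrt π) * ∫ t in (0:ℝ)..x, Real.exp (-t^2)

/-- The auxiliary function H. -/
noncomputable def H (x : ℝ) : ℝ := (2 / Real.sqrt π) * x * Real.exp (-x^2) / (1 - erf x)

section Aux
open MeasureTheory Set

noncomputable def J (x : ℝ) : ℝ := ∫ u in Ioi (0:ℝ), Real.exp (-(x^2*(u^2+2*u)))

lemma gauss_integrable : Integrable (fun t : ℝ => Real.exp (-t^2)) := by
  simpa using integrable_exp_neg_mul_sq (one_pos)

lemma erf_continuous : Continuous erf :=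
  continuous_const.mul (gauss_integrable.continuous_primitive 0)

lemma erf_zero : erf 0 = 0 := by simp [erf]

lemma integral_Ioi_add_right (f : ℝ → ℝ) (a d : ℝ) :
    ∫ x in Ioi a, f (x + d) = ∫ x in Ioi (a + d), f x := by
  have hemb := (MeasurableEquiv.addRight d).measurableEmbedding
  have hmap : Measure.map (fun x : ℝ => x + d) volume = volume :=
    (measurePreserving_add_right volume d).map_eq
  have h := hemb.setIntegral_map (μ := volume) f (Ioi (a + d))
  have hpre : (MeasurableEquiv.addRight d) ⁻¹' (Ioi (a + d)) = Ioi a := by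
    ext y; simp [MeasurableEquiv.addRight]
  rw [show ⇑(MeasurableEquiv.addRight d) = fun x : ℝ => x + d from rfl] at h hpre
  rw [hmap, hpre] at h
  exact h.symm



lemma J_integrableOn {x : ℝ} (hx : 0 < x) :
    IntegrableOn (fun u : ℝ => Real.exp (-(x^2*(u^2+2*u)))) (Ioi (0:ℝ)) := by
  apply (exp_neg_integrableOn_Ioi 0 (b := 2*x^2) (by positivity)).mono'
  · exact (Real.continuous_exp.comp (by continuity)).aestronglyMeasurable
  · filter_upwards [ae_restrict_mem measurableSet_Ioi] with u hu
    rw [Real.norm_eq_abs, abs_of_pos (Real.exp_pos _)]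
    apply Real.exp_le_exp.2
    nlinarith [le_of_lt (mem_Ioi.1 hu), sq_nonneg x, sq_nonneg u]

lemma J_pos {x : ℝ} (hx : 0 < x) : 0 < J x := by
  rw [J]
  rw [setIntegral_pos_iff_support_of_nonneg_ae]
  · have : Function.support (fun u : ℝ => Real.exp (-(x^2*(u^2+2*u)))) = univ := by
      ext u; simp [Function.mem_support, (Real.exp_pos _).ne']
    rw [this, univ_inter, Real.volume_Ioi]
    exact ENNReal.zero_lt_top
  · filter_upwards with u using (Real.exp_pos _).le
  · exact J_integrableOn hx

lemma J_le {x : ℝ} (hx : 0 < x) : J x ≤ 1/(2*x^2) := by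
  have h2x : (0:ℝ) < 2*x^2 := by positivity
  have hb : ∀ u ∈ Ioi (0:ℝ), Real.exp (-(x^2*(u^2+2*u))) ≤ Real.exp (-(2*x^2*u)) := by
    intro u hu
    apply Real.exp_le_exp.2
    nlinarith [le_of_lt (mem_Ioi.1 hu), sq_nonneg x]
  have hint2 : IntegrableOn (fun u : ℝ => Real.exp (-(2*x^2*u))) (Ioi (0:ℝ)) := by
    simpa [mul_assoc] using exp_neg_integrableOn_Ioi 0 h2x
  have hle := setIntegral_mono_on (J_integrableOn hx) hint2 measurableSet_Ioi hb
  have hcomp : ∫ u in Ioi (0:ℝ), Real.exp (-(2*x^2*u)) = 1/(2*x^2) := by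
    have := integral_comp_mul_left_Ioi (fun t : ℝ => Real.exp (-t)) 0 h2x
    simp only [mul_zero] at this
    rw [this, integral_exp_neg_Ioi_zero, smul_eq_mul, mul_one, one_div]
  rw [J]
  rw [hcomp] at hle
  exact hle

lemma J_lt {a b : ℝ} (ha : 0 < a) (hab : a < b) : J b < J a := by
  have hb : 0 < b := ha.trans hab
  have hsub : 0 < J a - J b := by
    rw [J, J, ← integral_sub (J_integrableOn ha) (J_integrableOn hb)]
    rw [setIntegral_pos_iff_support_of_nonneg_ae]
    · apply lt_of_lt_of_le (b := volume (Ioi (0:ℝ)))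
      · rw [Real.volume_Ioi]; exact ENNReal.zero_lt_top
      · apply measure_mono
        intro u hu
        have hu0 : 0 < u := mem_Ioi.1 hu
        refine ⟨?_, hu⟩
        have hg : 0 < u^2+2*u := by nlinarith
        have hlt : a^2*(u^2+2*u) < b^2*(u^2+2*u) :=
          mul_lt_mul_of_pos_right (by nlinarith) hg
        have : Real.exp (-(b^2*(u^2+2*u))) < Real.exp (-(a^2*(u^2+2*u))) := by
          apply Real.exp_lt_exp.2; linarith
        simp only [Function.mem_support]
        intro hc
        rw [sub_eq_zero] at hc
        exact this.ne hc.symm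
    · filter_upwards [ae_restrict_mem measurableSet_Ioi] with u hu
      have hu0 : 0 < u := mem_Ioi.1 hu
      have hg : (0:ℝ) ≤ u^2+2*u := by nlinarith
      have hlt : a^2*(u^2+2*u) ≤ b^2*(u^2+2*u) :=
        mul_le_mul_of_nonneg_right (by nlinarith) hg
      have : Real.exp (-(b^2*(u^2+2*u))) ≤ Real.exp (-(a^2*(u^2+2*u))) := by
        apply Real.exp_le_exp.2; linarith
      simpa [sub_nonneg] using this
    · exact (J_integrableOn ha).sub (J_integrableOn hb)
  linarith

lemma I_eq {x : ℝ} (hx : 0 < x) :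
    ∫ t in Ioi x, Real.exp (-t^2) = x * Real.exp (-x^2) * J x := by
  have h1 : ∫ u in Ioi (1:ℝ), Real.exp (-(x*u)^2)
      = x⁻¹ • ∫ t in Ioi (x*1), Real.exp (-t^2) :=
    integral_comp_mul_left_Ioi (fun t : ℝ => Real.exp (-t^2)) 1 hx
  have h2 : ∫ u in Ioi (0:ℝ), Real.exp (-(x*(u+1))^2) = ∫ u in Ioi (0+1:ℝ), Real.exp (-(x*u)^2) :=
    integral_Ioi_add_right (fun u : ℝ => Real.exp (-(x*u)^2)) 0 1
  have h3 : ∀ u : ℝ, Real.exp (-(x*(u+1))^2)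
      = Real.exp (-x^2) * Real.exp (-(x^2*(u^2+2*u))) := by
    intro u
    rw [← Real.exp_add]
    congr 1
    ring
  have h4 : ∫ u in Ioi (0:ℝ), Real.exp (-(x*(u+1))^2) = Real.exp (-x^2) * J x := by
    simp_rw [h3]
    rw [J, integral_const_mul]
  rw [mul_one] at h1
  rw [zero_add] at h2
  rw [h1, smul_eq_mul] at h2
  rw [h4] at h2
  field_simp at h2
  linarith [h2]

lemma integral_Ioi_gauss_split {x : ℝ} (hx : 0 ≤ x) :
    (∫ t in (0:ℝ)..x, Real.exp (-t^2)) = Real.sqrt π / 2 - ∫ t in Ioi x, Real.exp (-t^2) := by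
  have h1 : (∫ t in Ioi (0:ℝ), Real.exp (-t^2)) = Real.sqrt π / 2 := by
    have := integral_gaussian_Ioi 1
    simpa using this
  have hsplit : (∫ t in Ioi (0:ℝ), Real.exp (-t^2))
      = (∫ t in Ioc (0:ℝ) x, Real.exp (-t^2)) + ∫ t in Ioi x, Real.exp (-t^2) := by
    rw [← Ioc_union_Ioi_eq_Ioi hx,
      setIntegral_union (Ioc_disjoint_Ioi le_rfl) measurableSet_Ioi
        gauss_integrable.integrableOn gauss_integrable.integrableOn]
  rw [intervalIntegral.integral_of_le hx]
  rw [h1] at hsplit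
  linarith

lemma one_sub_erf {x : ℝ} (hx : 0 < x) :
    1 - erf x = (2 / Real.sqrt π) * x * Real.exp (-x^2) * J x := by
  have hπ : (0:ℝ) < Real.sqrt π := Real.sqrt_pos.2 Real.pi_pos
  rw [erf, integral_Ioi_gauss_split hx.le, I_eq hx]
  field_simp
  ring

lemma one_sub_erf_pos {x : ℝ} (hx : 0 < x) : 0 < 1 - erf x := by
  rw [one_sub_erf hx]
  have hπ : (0:ℝ) < Real.sqrt π := Real.sqrt_pos.2 Real.pi_pos
  have := J_pos hx
  positivity

lemma H_eq {x : ℝ} (hx : 0 < x) : H x = (J x)⁻¹ := by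
  have hπ : (0:ℝ) < Real.sqrt π := Real.sqrt_pos.2 Real.pi_pos
  have hnum : (0:ℝ) < 2 / Real.sqrt π * x * Real.exp (-x^2) := by positivity
  rw [H, one_sub_erf hx, div_mul_eq_div_div, div_self hnum.ne', one_div]

lemma H_lower {x : ℝ} (hx : 0 < x) : 2*x^2 ≤ H x := by
  rw [H_eq hx]
  have hJ := J_pos hx
  have h2x : (0:ℝ) < 2*x^2 := by positivity
  rw [← one_div, le_div_iff₀ hJ]
  have := J_le hx
  calc 2*x^2 * J x ≤ 2*x^2 * (1/(2*x^2)) := by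
        exact mul_le_mul_of_nonneg_left this h2x.le
    _ = 1 := by field_simp

lemma H_inj {a b : ℝ} (ha : 0 < a) (hb : 0 < b) (h : H a = H b) : a = b := by
  rcases lt_trichotomy a b with hlt | heq | hgt
  · exfalso
    have := J_lt ha hlt
    rw [H_eq ha, H_eq hb] at h
    have := inv_strictAnti₀ (J_pos (ha.trans hlt)) this
    rw [h] at this
    exact lt_irrefl _ this
  · exact heq
  · exfalso
    have := J_lt hb hgt
    rw [H_eq ha, H_eq hb] at h
    have := inv_strictAnti₀ (J_pos (hb.trans hgt)) this
    rw [h] at this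
    exact lt_irrefl _ this

lemma H_zero : H 0 = 0 := by simp [H]

lemma H_continuousOn {M : ℝ} : ContinuousOn H (Icc 0 M) := by
  apply ContinuousOn.div
  · exact (continuous_const.mul continuous_id |>.mul
      (Real.continuous_exp.comp (by continuity))).continuousOn
  · exact (continuous_const.sub erf_continuous).continuousOn
  · intro x hx
    rcases eq_or_lt_of_le hx.1 with h0 | h0
    · rw [← h0, erf_zero]; norm_num
    · exact (one_sub_erf_pos h0).ne'

lemma exists_root {c : ℝ} (hc : 0 < c) : ∃ x : ℝ, 0 < x ∧ H x = c := by
  set M := Real.sqrt c + 1 with hM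
  have hM0 : 0 < M := by positivity
  have hcM : c < H M := by
    have h1 : c < 2*M^2 := by
      have : Real.sqrt c ^ 2 = c := Real.sq_sqrt hc.le
      nlinarith [Real.sqrt_nonneg c]
    exact lt_of_lt_of_le h1 (H_lower hM0)
  have key := intermediate_value_Ioo hM0.le (H_continuousOn (M := M))
  rw [H_zero] at key
  obtain ⟨x, hx, hHx⟩ := key ⟨hc, hcM⟩
  exact ⟨x, hx.1, hHx⟩

lemma sol_eq (δ m₂ : ℝ) (hδ : 0 < δ) (hm₂ : m₂ ∈ Set.Ioo (0:ℝ) 1) (xbar : ℝ)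
    (hxb : 0 < xbar) (hH : H xbar = m₂ / (1 - m₂)) (p : ℝ × ℝ)
    (hp : 0 < p.1 ∧ 0 < p.2 ∧
        p.2 * (1 - erf (δ / Real.sqrt (2 * p.1))) = 1 - m₂ ∧
        (2 * p.2 / Real.sqrt π) * (δ / Real.sqrt (2 * p.1)) * Real.exp (-δ^2 / (2 * p.1)) = m₂) :
    p = (δ^2 / (2 * xbar^2), (1 - m₂) / (1 - erf xbar)) := by
  obtain ⟨h1, h2, e1, e2⟩ := hp
  obtain ⟨hm0, hm1⟩ := hm₂
  have hm' : (0:ℝ) < 1 - m₂ := by linarith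
  have h2p : (0:ℝ) < 2 * p.1 := by linarith
  have hs : (0:ℝ) < Real.sqrt (2 * p.1) := Real.sqrt_pos.2 h2p
  set x := δ / Real.sqrt (2 * p.1) with hxdef
  have hxpos : 0 < x := div_pos hδ hs
  have hx2 : x^2 = δ^2 / (2 * p.1) := by
    rw [hxdef, div_pow, Real.sq_sqrt h2p.le]
  have e2' : p.2 * ((2 / Real.sqrt π) * x * Real.exp (-x^2)) = m₂ := by
    rw [show -δ^2 / (2*p.1) = -(δ^2/(2*p.1)) from by ring] at e2
    rw [hx2, ← e2]; ring
  have hden : 0 < 1 - erf x := one_sub_erf_pos hxpos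
  have hHx : H x = m₂ / (1 - m₂) := by
    rw [H]
    rw [show (2 / Real.sqrt π) * x * Real.exp (-x^2) = m₂ / p.2 from by
      field_simp at e2' ⊢; linarith [e2']]
    rw [show 1 - erf x = (1 - m₂) / p.2 from by field_simp; linarith [e1]]
    rw [div_div_div_eq, mul_comm m₂ p.2, mul_div_mul_left _ _ h2.ne']
  have hxx : x = xbar := H_inj hxpos hxb (hHx.trans hH.symm)
  have hp1 : p.1 = δ^2 / (2 * xbar^2) := by
    have : Real.sqrt (2 * p.1) = δ / xbar := by
      rw [hxdef] at hxx
      field_simp at hxx ⊢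
      linarith [hxx]
    have h2 : 2 * p.1 = (δ / xbar)^2 := by
      rw [← this, Real.sq_sqrt h2p.le]
    rw [div_pow] at h2
    field_simp at h2 ⊢
    linarith [h2]
  have hp2 : p.2 = (1 - m₂) / (1 - erf xbar) := by
    rw [← hxx]
    rw [eq_div_iff hden.ne']
    exact e1
  exact Prod.ext hp1 hp2

lemma sol_mk (δ m₂ : ℝ) (hδ : 0 < δ) (hm₂ : m₂ ∈ Set.Ioo (0:ℝ) 1) (xbar : ℝ)
    (hxb : 0 < xbar) (hH : H xbar = m₂ / (1 - m₂)) :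
    0 < (δ^2 / (2 * xbar^2) : ℝ) ∧ 0 < ((1 - m₂) / (1 - erf xbar) : ℝ) ∧
      ((1 - m₂) / (1 - erf xbar)) * (1 - erf (δ / Real.sqrt (2 * (δ^2 / (2 * xbar^2))))) = 1 - m₂ ∧
      (2 * ((1 - m₂) / (1 - erf xbar)) / Real.sqrt π) * (δ / Real.sqrt (2 * (δ^2 / (2 * xbar^2)))) *
        Real.exp (-δ^2 / (2 * (δ^2 / (2 * xbar^2)))) = m₂ := by
  obtain ⟨hm0, hm1⟩ := hm₂
  have hm' : (0:ℝ) < 1 - m₂ := by linarith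
  have hden : 0 < 1 - erf xbar := one_sub_erf_pos hxb
  have hp1 : (0:ℝ) < δ^2 / (2 * xbar^2) := by positivity
  have hsimp : 2 * (δ^2 / (2 * xbar^2)) = (δ / xbar)^2 := by
    field_simp
  have hsqrt : Real.sqrt (2 * (δ^2 / (2 * xbar^2))) = δ / xbar := by
    rw [hsimp, Real.sqrt_sq (by positivity)]
  have hxx : δ / Real.sqrt (2 * (δ^2 / (2 * xbar^2))) = xbar := by
    rw [hsqrt]; field_simp
  have hexp : -δ^2 / (2 * (δ^2 / (2 * xbar^2))) = -xbar^2 := by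
    rw [neg_div, hsimp, div_pow]
    field_simp
  refine ⟨hp1, by positivity, ?_, ?_⟩
  · rw [hxx, div_mul_cancel₀ _ hden.ne']
  · rw [hxx, hexp]
    have : (2 * ((1 - m₂) / (1 - erf xbar)) / Real.sqrt π) * xbar * Real.exp (-xbar^2)
        = ((1 - m₂) / (1 - erf xbar)) * ((2 / Real.sqrt π) * xbar * Real.exp (-xbar^2)) := by
      ring
    rw [this]
    have hnum : (2 / Real.sqrt π) * xbar * Real.exp (-xbar^2) = H xbar * (1 - erf xbar) := by
      rw [H, div_mul_cancel₀ _ hden.ne']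
    rw [hnum, hH]
    field_simp

end Aux

theorem stmt6 (δ m₂ : ℝ) (hδ : 0 < δ) (hm₂ : m₂ ∈ Set.Ioo (0:ℝ) 1) :
    (∃! p : ℝ × ℝ, 0 < p.1 ∧ 0 < p.2 ∧
        p.2 * (1 - erf (δ / Real.sqrt (2 * p.1))) = 1 - m₂ ∧
        (2 * p.2 / Real.sqrt π) * (δ / Real.sqrt (2 * p.1)) * Real.exp (-δ^2 / (2 * p.1)) = m₂)
    ∧ ∀ xbar : ℝ, 0 < xbar → H xbar = (1 - (1 - m₂)) / (1 - m₂) →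
        (∀ p : ℝ × ℝ, (0 < p.1 ∧ 0 < p.2 ∧
            p.2 * (1 - erf (δ / Real.sqrt (2 * p.1))) = 1 - m₂ ∧
            (2 * p.2 / Real.sqrt π) * (δ / Real.sqrt (2 * p.1)) * Real.exp (-δ^2 / (2 * p.1)) = m₂)
          → p = (δ^2 / (2 * xbar^2), (1 - m₂) / (1 - erf xbar))) := by
  obtain ⟨hm0, hm1⟩ := hm₂
  have hm' : (0:ℝ) < 1 - m₂ := by linarith
  have hc : (0:ℝ) < m₂ / (1 - m₂) := div_pos hm0 hm'
  have hcrw : (1 - (1 - m₂)) / (1 - m₂) = m₂ / (1 - m₂) := by ring_nf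
  constructor
  · obtain ⟨x0, hx0, hHx0⟩ := exists_root hc
    refine ⟨(δ^2 / (2 * x0^2), (1 - m₂) / (1 - erf x0)), ?_, ?_⟩
    · exact sol_mk δ m₂ hδ ⟨hm0, hm1⟩ x0 hx0 hHx0
    · intro q hq
      exact sol_eq δ m₂ hδ ⟨hm0, hm1⟩ x0 hx0 hHx0 q hq
  · intro xbar hxb hHxb p hp
    rw [hcrw] at hHxb
    exact sol_eq δ m₂ hδ ⟨hm0, hm1⟩ xbar hxb hHxb p hp
end

section
/- For any λ ≠ 0, the quantity δ(λ) = 1/λ + 1/(1 - exp(λ)) lies in the open interval (0, 1); moreover δ(λ) → 1/2 as λ → 0. -/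
open Filter

theorem stmt17 :
    (∀ l : ℝ, l ≠ 0 → (1 / l + 1 / (1 - Real.exp l)) ∈ Set.Ioo (0:ℝ) 1)
    ∧ Tendsto (fun l : ℝ => 1 / l + 1 / (1 - Real.exp l))
        (nhdsWithin 0 {(0:ℝ)}ᶜ) (nhds (1/2)) := by
  constructor
  · intro l hl
    have hE := Real.exp_pos l
    have hA : l + 1 < Real.exp l := Real.add_one_lt_exp hl
    have hB : (1 - l) * Real.exp l < 1 := by
      have h := Real.add_one_lt_exp (neg_ne_zero.mpr hl)
      rw [Real.exp_neg] at h
      have hinv : (Real.exp l)⁻¹ * Real.exp l = 1 := inv_mul_cancel₀ hE.ne'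
      nlinarith
    have hden : l * (1 - Real.exp l) < 0 := by
      rcases hl.lt_or_gt with h | h
      · have hlt : Real.exp l < 1 := by nlinarith
        exact mul_neg_of_neg_of_pos h (by linarith)
      · exact mul_neg_of_pos_of_neg h (by linarith)
    have hne : (1:ℝ) - Real.exp l ≠ 0 := by
      intro h0; rw [h0, mul_zero] at hden; exact lt_irrefl 0 hden
    have key : 1/l + 1/(1 - Real.exp l) = (1 - Real.exp l + l)/(l * (1 - Real.exp l)) := by
      field_simp
    constructor
    · rw [key]; exact div_pos_of_neg_of_neg (by linarith) hden
    · rw [key, div_lt_one_of_neg hden]; nlinarith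
  · have h1 : Tendsto (fun l : ℝ => (Real.exp l - 1)/l)
        (nhdsWithin 0 {(0:ℝ)}ᶜ) (nhds 1) := by
      have h := hasDerivAt_iff_tendsto_slope.mp (Real.hasDerivAt_exp 0)
      simp only [Real.exp_zero] at h
      refine h.congr (fun x => ?_)
      simp [slope_def_field, div_eq_inv_mul]
    have h2 : Tendsto (fun l : ℝ => l/(Real.exp l - 1))
        (nhdsWithin 0 {(0:ℝ)}ᶜ) (nhds 1) := by
      have h := h1.inv₀ (by norm_num)
      norm_num at h
      exact h
    have h3 : Tendsto (fun l : ℝ => (Real.exp l - 1 - l)/l^2)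
        (nhdsWithin 0 {(0:ℝ)}ᶜ) (nhds (1/2)) := by
      rw [← tendsto_sub_nhds_zero_iff]
      have hb : ∀ᶠ l in nhdsWithin (0:ℝ) {(0:ℝ)}ᶜ,
          ‖(Real.exp l - 1 - l)/l^2 - 1/2‖ ≤ (2/9) * |l| := by
        have h01 : ∀ᶠ l : ℝ in nhds 0, |l| ≤ 1 := by
          filter_upwards [Metric.ball_mem_nhds (0:ℝ) one_pos] with x hx
          rw [Metric.mem_ball, Real.dist_eq, sub_zero] at hx
          linarith
        filter_upwards [nhdsWithin_le_nhds h01, self_mem_nhdsWithin] with x hx hx0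
        have hx0' : x ≠ 0 := hx0
        have hbound : |Real.exp x - (1 + x + x^2/2)| ≤ |x|^3 * (2/9) := by
          have h := Real.exp_bound hx (by norm_num : 0 < 3)
          norm_num [Finset.sum_range_succ, Nat.factorial] at h
          calc |Real.exp x - (1 + x + x^2/2)|
              = |Real.exp x - (1 + x + x ^ 2 * 2⁻¹)| := by ring_nf
            _ ≤ |x|^3 * (2/9) := by convert h using 2; ring
        have hxpos : 0 < |x| := abs_pos.2 hx0'
        have hx2 : x^2 ≠ 0 := pow_ne_zero 2 hx0'
        have heq : (Real.exp x - 1 - x)/x^2 - 1/2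
            = (Real.exp x - (1 + x + x^2/2))/x^2 := by field_simp; ring
        rw [Real.norm_eq_abs, heq, abs_div, abs_pow]
        rw [div_le_iff₀ (by positivity : (0:ℝ) < |x|^2)]
        calc |Real.exp x - (1 + x + x^2/2)| ≤ |x|^3 * (2/9) := hbound
          _ = 2/9 * |x| * |x|^2 := by ring
      have hz : Tendsto (fun l : ℝ => (2/9) * |l|) (nhdsWithin 0 {(0:ℝ)}ᶜ) (nhds 0) := by
        have h : Tendsto (fun l : ℝ => (2/9) * |l|) (nhds 0) (nhds 0) := by
          simpa using ((continuous_abs.tendsto (0:ℝ)).const_mul (2/9 : ℝ))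
        exact h.mono_left nhdsWithin_le_nhds
      exact squeeze_zero_norm' hb hz
    have heq : ∀ᶠ l in nhdsWithin (0:ℝ) {(0:ℝ)}ᶜ,
        ((Real.exp l - 1 - l)/l^2) * (l/(Real.exp l - 1))
          = 1/l + 1/(1 - Real.exp l) := by
      filter_upwards [self_mem_nhdsWithin] with x hx
      have hx0 : x ≠ 0 := hx
      have hexp : Real.exp x - 1 ≠ 0 :=
        sub_ne_zero.mpr (fun h => hx0 (by simpa using h))
      have h1e : (1:ℝ) - Real.exp x ≠ 0 := by
        intro h; apply hexp; linarith
      field_simp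
      ring
    have hfin := h3.mul h2
    rw [show (1/2 : ℝ) * 1 = 1/2 by ring] at hfin
    exact Tendsto.congr' heq hfin
end
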